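/- For all p ≥ √3, one has 3·Ψ'(1+3/p) − Ψ'(1+1/p) > 0, where Ψ' is the Trigamma function. -/

import Mathlib

open Real

/-- The Digamma function `Ψ = (ln Γ)'`. -/
noncomputable def digamma (x : ℝ) : ℝ := deriv (fun y => Real.log (Real.Gamma y)) x

/-- The Trigamma function `Ψ'`, the derivative of the Digamma function. -/
noncomputable def trigamma (x : ℝ) : ℝ := deriv digamma x

namespace TrigammaAux

open Filter Topology Finset

local notation "γ" => Real.eulerMascheroniConstant

/-- Summand of the log-Gamma series. -/
noncomputable def g (k : ℕ) (x : ℝ) : ℝ := x / (k + 1) - Real.log (1 + x / (k + 1))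

/-- Derivative of `g k`. -/
noncomputable def gd (k : ℕ) (x : ℝ) : ℝ := 1 / (k + 1) - 1 / (x + (k + 1))

/-- Second derivative of `g k`. -/
noncomputable def gdd (k : ℕ) (x : ℝ) : ℝ := 1 / (x + (k + 1)) ^ 2

lemma sb : Summable (fun k : ℕ => 1 / ((k : ℝ) + 1) ^ 2) := by
  have h := Real.summable_one_div_nat_pow.mpr one_lt_two
  exact ((summable_nat_add_iff 1).mpr h).congr fun k => by push_cast; ring

lemma log_one_add_bounds {t : ℝ} (ht : 0 ≤ t) :
    t - t ^ 2 ≤ Real.log (1 + t) ∧ Real.log (1 + t) ≤ t := by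
  have h1 : (0:ℝ) < 1 + t := by linarith
  constructor
  · have h2 : Real.log (1 + t)⁻¹ ≤ (1 + t)⁻¹ - 1 :=
      Real.log_le_sub_one_of_pos (by positivity)
    rw [Real.log_inv] at h2
    have h3 : t / (1 + t) ≤ Real.log (1 + t) := by
      have : 1 - (1 + t)⁻¹ = t / (1 + t) := by field_simp; ring
      linarith [this ▸ (by linarith : 1 - (1 + t)⁻¹ ≤ Real.log (1 + t))]
    have h4 : t - t ^ 2 ≤ t / (1 + t) := by
      rw [le_div_iff₀ h1]; nlinarith
    linarith
  · have := Real.log_le_sub_one_of_pos h1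
    linarith

lemma g_nonneg {x : ℝ} (hx : 0 ≤ x) (k : ℕ) : 0 ≤ g k x := by
  have hc : (0:ℝ) < (k:ℝ) + 1 := by positivity
  have ht : 0 ≤ x / ((k:ℝ) + 1) := by positivity
  have := (log_one_add_bounds ht).2
  simpa [g] using this

lemma g_le {x : ℝ} (hx : 0 ≤ x) (k : ℕ) : g k x ≤ x ^ 2 * (1 / ((k:ℝ) + 1) ^ 2) := by
  have hc : (0:ℝ) < (k:ℝ) + 1 := by positivity
  have ht : 0 ≤ x / ((k:ℝ) + 1) := by positivity
  have h := (log_one_add_bounds ht).1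
  have : (x / ((k:ℝ) + 1)) ^ 2 = x ^ 2 * (1 / ((k:ℝ) + 1) ^ 2) := by
    field_simp
  rw [g]
  nlinarith [h]

lemma summable_g {x : ℝ} (hx : 0 ≤ x) : Summable (fun k => g k x) :=
  Summable.of_nonneg_of_le (g_nonneg hx) (g_le hx) (sb.mul_left (x ^ 2))

lemma gd_nonneg {x : ℝ} (hx : 0 ≤ x) (k : ℕ) : 0 ≤ gd k x := by
  have hc : (0:ℝ) < (k:ℝ) + 1 := by positivity
  have h2 : (0:ℝ) < x + ((k:ℝ) + 1) := by linarith
  rw [gd, sub_nonneg, div_le_div_iff₀ h2 hc]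
  linarith

lemma gd_le {x b : ℝ} (hx : 0 ≤ x) (hb : x ≤ b) (k : ℕ) :
    gd k x ≤ b * (1 / ((k:ℝ) + 1) ^ 2) := by
  have hc : (0:ℝ) < (k:ℝ) + 1 := by positivity
  have h2 : (0:ℝ) < x + ((k:ℝ) + 1) := by linarith
  have key : gd k x = x / (((k:ℝ) + 1) * (x + ((k:ℝ) + 1))) := by
    rw [gd]; field_simp; ring
  rw [key]
  have hb0 : 0 ≤ b := le_trans hx hb
  have heq2 : b * (1 / ((k:ℝ)+1)^2) * (((k:ℝ) + 1) * (x + ((k:ℝ) + 1)))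
      = b * (x + ((k:ℝ) + 1)) / ((k:ℝ) + 1) := by
    field_simp
  rw [div_le_iff₀ (by positivity), heq2, le_div_iff₀ hc]
  nlinarith

lemma summable_gd {x : ℝ} (hx : 0 ≤ x) : Summable (fun k => gd k x) :=
  Summable.of_nonneg_of_le (gd_nonneg hx) (gd_le hx le_rfl) (sb.mul_left x)

lemma gdd_pos {x : ℝ} (hx : 0 ≤ x) (k : ℕ) : 0 < gdd k x := by
  have : (0:ℝ) < x + ((k:ℝ) + 1) := by positivity
  rw [gdd]; positivity

lemma gdd_le {x : ℝ} (hx : 0 ≤ x) (k : ℕ) : gdd k x ≤ 1 / ((k:ℝ) + 1) ^ 2 := by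
  have hc : (0:ℝ) < (k:ℝ) + 1 := by positivity
  have h2 : (0:ℝ) < x + ((k:ℝ) + 1) := by linarith
  rw [gdd]
  apply div_le_div_of_nonneg_left one_pos.le (by positivity)
  nlinarith

lemma summable_gdd {x : ℝ} (hx : 0 ≤ x) : Summable (fun k => gdd k x) :=
  Summable.of_nonneg_of_le (fun k => (gdd_pos hx k).le) (gdd_le hx) sb

lemma hasDerivAt_g {x : ℝ} (hx : 0 < x) (k : ℕ) :
    HasDerivAt (g k) (gd k x) x := by
  have hc : (0:ℝ) < (k:ℝ) + 1 := by positivity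
  have h2 : (0:ℝ) < 1 + x / ((k:ℝ) + 1) := by positivity
  have h1 : HasDerivAt (fun y : ℝ => 1 + y / ((k:ℝ) + 1)) (1 / ((k:ℝ) + 1)) x := by
    simpa using ((hasDerivAt_id x).div_const ((k:ℝ) + 1)).const_add 1
  have h3 : HasDerivAt (fun y : ℝ => Real.log (1 + y / ((k:ℝ) + 1)))
      ((1 / ((k:ℝ) + 1)) / (1 + x / ((k:ℝ) + 1))) x := h1.log h2.ne'
  have h4 : HasDerivAt (fun y : ℝ => y / ((k:ℝ) + 1)) (1 / ((k:ℝ) + 1)) x := by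
    simpa using (hasDerivAt_id x).div_const ((k:ℝ) + 1)
  have hxc : (0:ℝ) < x + ((k:ℝ) + 1) := by positivity
  have heq : (1 / ((k:ℝ)+1)) / (1 + x / ((k:ℝ)+1)) = 1 / (x + ((k:ℝ)+1)) := by
    rw [div_eq_div_iff h2.ne' hxc.ne']
    field_simp
    ring
  have := h4.sub h3
  rw [gd, ← heq]
  exact this

lemma hasDerivAt_gd {x : ℝ} (hx : 0 < x) (k : ℕ) :
    HasDerivAt (gd k) (gdd k x) x := by
  have hxc : x + ((k:ℝ) + 1) ≠ 0 := by positivity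
  have h1 : HasDerivAt (fun y : ℝ => y + ((k:ℝ) + 1)) 1 x := by
    simpa using (hasDerivAt_id x).add_const ((k:ℝ) + 1)
  have h2 := h1.inv hxc
  have h3 := h2.const_sub (1 / ((k:ℝ) + 1))
  have hfun : gd k = fun y => 1 / ((k:ℝ)+1) - (y + ((k:ℝ)+1))⁻¹ := by
    funext y; rw [gd, one_div, one_div]
  have hval : gdd k x = -(-1 / (x + ((k:ℝ)+1)) ^ 2) := by
    rw [gdd, neg_div, neg_neg]
  rw [hfun, hval]
  exact h3

lemma log_gamma_eq {x : ℝ} (hx : 0 < x) :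
    Real.log (Real.Gamma x) = -Real.log x - γ * x + ∑' k, g k x := by
  have h1 := Real.BohrMollerup.tendsto_log_gamma hx
  have key : ∀ n : ℕ, 1 ≤ n → Real.BohrMollerup.logGammaSeq x n =
      -Real.log x + (∑ k ∈ range n, g k x) - x * (((harmonic n : ℚ) : ℝ) - Real.log n) := by
    intro n hn
    rw [Real.BohrMollerup.logGammaSeq]
    rw [Finset.sum_range_succ' (fun m : ℕ => Real.log (x + m)) n]
    have hfact : Real.log ((n.factorial : ℕ) : ℝ) = ∑ k ∈ range n, Real.log ((k:ℝ) + 1) := by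
      rw [← Finset.prod_range_add_one_eq_factorial, Nat.cast_prod,
        Real.log_prod (fun i _ => by exact_mod_cast Nat.succ_ne_zero i)]
      exact Finset.sum_congr rfl fun i _ => by norm_num
    have hharm : ((harmonic n : ℚ) : ℝ) = ∑ k ∈ range n, 1 / ((k:ℝ) + 1) := by
      rw [harmonic]
      push_cast
      simp [one_div]
    have hg : ∀ k ∈ range n, g k x
        = x * (1 / ((k:ℝ) + 1)) - (Real.log (x + ((k:ℝ) + 1)) - Real.log ((k:ℝ) + 1)) := by
      intro k _
      have hc : (0:ℝ) < (k:ℝ) + 1 := by positivity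
      have hxc : (0:ℝ) < x + ((k:ℝ) + 1) := by linarith
      rw [g, ← Real.log_div hxc.ne' hc.ne']
      congr 2
      · field_simp
      · field_simp
        ring
    have hsum1 : ∀ k ∈ range n, Real.log (x + ((k:ℕ) + 1 : ℕ))
        = Real.log (x + ((k:ℝ) + 1)) := by
      intro k _; congr 1; push_cast; ring
    rw [hfact, Finset.sum_congr rfl hsum1, Finset.sum_congr rfl hg, hharm]
    simp only [Finset.sum_sub_distrib, Finset.mul_sum, Nat.cast_zero, add_zero]
    rw [mul_sub, Finset.mul_sum]
    ring
  have h2 : Tendsto (fun n => ∑ k ∈ range n, g k x) atTop (𝓝 (∑' k, g k x)) :=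
    (summable_g hx.le).hasSum.tendsto_sum_nat
  have h3 : Tendsto (fun n : ℕ => ((harmonic n : ℚ) : ℝ) - Real.log n) atTop (𝓝 γ) :=
    Real.tendsto_harmonic_sub_log
  have h4 : Tendsto (fun n : ℕ =>
      -Real.log x + (∑ k ∈ range n, g k x) - x * (((harmonic n : ℚ) : ℝ) - Real.log n))
      atTop (𝓝 (-Real.log x + (∑' k, g k x) - x * γ)) :=
    ((h2.const_add _).sub (h3.const_mul x))
  have h5 : Tendsto (Real.BohrMollerup.logGammaSeq x) atTop
      (𝓝 (-Real.log x + (∑' k, g k x) - x * γ)) := by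
    apply h4.congr'
    filter_upwards [eventually_ge_atTop 1] with n hn
    exact (key n hn).symm
  have := tendsto_nhds_unique h1 h5
  rw [this]; ring

lemma digamma_eq {x : ℝ} (hx : 0 < x) :
    digamma x = -1 / x - γ + ∑' k, gd k x := by
  set b := x + 1 with hb
  have hxb : x ∈ Set.Ioo (0:ℝ) b := ⟨hx, by simp [hb]⟩
  have hψ : ∀ y ∈ Set.Ioo (0:ℝ) b,
      HasDerivAt (fun z => ∑' k, g k z) (∑' k, gd k y) y := by
    intro y hy
    refine hasDerivAt_tsum_of_isPreconnected (sb.mul_left b) isOpen_Ioo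
      (convex_Ioo (0:ℝ) b).isPreconnected
      (fun k z hz => hasDerivAt_g hz.1 k)
      (fun k z hz => ?_) hxb (summable_g hx.le) hy
    rw [Real.norm_eq_abs, abs_of_nonneg (gd_nonneg hz.1.le k)]
    exact gd_le hz.1.le hz.2.le k
  have hF : HasDerivAt (fun y => -Real.log y - γ * y + ∑' k, g k y)
      (-1 / x - γ + ∑' k, gd k x) x := by
    have hl : HasDerivAt (fun y : ℝ => -Real.log y) (-(x⁻¹)) x :=
      (Real.hasDerivAt_log hx.ne').neg
    have hγ : HasDerivAt (fun y : ℝ => γ * y) γ x := by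
      simpa using (hasDerivAt_id x).const_mul γ
    have := (hl.sub hγ).add (hψ x hxb)
    rw [neg_div, one_div]
    exact this
  have heq : (fun y => Real.log (Real.Gamma y)) =ᶠ[𝓝 x]
      (fun y => -Real.log y - γ * y + ∑' k, g k y) := by
    filter_upwards [Ioi_mem_nhds hx] with y hy
    exact log_gamma_eq hy
  rw [digamma, heq.deriv_eq, hF.deriv]

lemma trigamma_eq {x : ℝ} (hx : 0 < x) :
    trigamma x = 1 / x ^ 2 + ∑' k, gdd k x := by
  have hψ : ∀ y ∈ Set.Ioi (0:ℝ),
      HasDerivAt (fun z => ∑' k, gd k z) (∑' k, gdd k y) y := by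
    intro y hy
    refine hasDerivAt_tsum_of_isPreconnected sb isOpen_Ioi
      (convex_Ioi (0:ℝ)).isPreconnected
      (fun k z hz => hasDerivAt_gd hz k)
      (fun k z hz => ?_) (Set.mem_Ioi.mpr hx) (summable_gd hx.le) hy
    rw [Real.norm_eq_abs, abs_of_nonneg (gdd_pos (Set.mem_Ioi.mp hz).le k).le]
    exact gdd_le (Set.mem_Ioi.mp hz).le k
  have hD : HasDerivAt (fun y => -1 / y - γ + ∑' k, gd k y)
      (1 / x ^ 2 + ∑' k, gdd k x) x := by
    have h1 : HasDerivAt (fun y : ℝ => -1 / y) (1 / x ^ 2) x := by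
      have h := (hasDerivAt_inv hx.ne').neg
      have hfun : (fun y : ℝ => -1 / y) = fun y : ℝ => -(y⁻¹) := by
        funext y; rw [neg_div, one_div]
      have hval : (1:ℝ) / x ^ 2 = -(-(x ^ 2)⁻¹) := by rw [neg_neg, one_div]
      rw [hfun, hval]
      exact h
    have h2 : HasDerivAt (fun y : ℝ => -1 / y - γ) (1 / x ^ 2) x := h1.sub_const γ
    exact h2.add (hψ x (Set.mem_Ioi.mpr hx))
  have heq : digamma =ᶠ[𝓝 x] (fun y => -1 / y - γ + ∑' k, gd k y) := by
    filter_upwards [Ioi_mem_nhds hx] with y hy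
    exact digamma_eq hy
  rw [trigamma, heq.deriv_eq, hD.deriv]

end TrigammaAux

theorem stmt2 (p : ℝ) (hp : Real.sqrt 3 ≤ p) :
    0 < 3 * trigamma (1 + 3 / p) - trigamma (1 + 1 / p) := by
  have h3 : (0:ℝ) < Real.sqrt 3 := Real.sqrt_pos.mpr (by norm_num)
  have hs3 : Real.sqrt 3 ^ 2 = 3 := Real.sq_sqrt (by norm_num)
  have hp0 : 0 < p := lt_of_lt_of_le h3 hp
  set a := 3 / p with ha
  set b := 1 / p with hb
  have ha0 : 0 < a := by positivity
  have hb0 : 0 < b := by positivity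
  have hab : a = 3 * b := by rw [ha, hb]; ring
  have hkey : Real.sqrt 3 * b ≤ 1 := by
    rw [hb]
    rw [mul_one_div, div_le_one hp0]
    exact hp
  have h1a : (0:ℝ) < 1 + a := by linarith
  have h1b : (0:ℝ) < 1 + b := by linarith
  rw [TrigammaAux.trigamma_eq h1a, TrigammaAux.trigamma_eq h1b]
  -- head terms: 1/(1+b)^2 ≤ 3/(1+a)^2
  have hhead : 1 / (1 + b) ^ 2 ≤ 3 * (1 / (1 + a) ^ 2) := by
    rw [mul_one_div, div_le_div_iff₀ (by positivity) (by positivity)]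
    have hstep : 1 + a ≤ Real.sqrt 3 * (1 + b) := by
      have : a - Real.sqrt 3 * b = Real.sqrt 3 * (Real.sqrt 3 - 1) * b := by
        rw [hab]; nlinarith
      nlinarith [Real.sqrt_le_sqrt (by norm_num : (1:ℝ) ≤ 3), Real.sqrt_one]
    nlinarith [mul_le_mul hstep hstep h1a.le (by positivity : (0:ℝ) ≤ Real.sqrt 3 * (1 + b))]
  -- tails: ∑ gdd k (1+b) < 3 * ∑ gdd k (1+a)
  have htail : ∑' k, TrigammaAux.gdd k (1 + b) < ∑' k, 3 * TrigammaAux.gdd k (1 + a) := by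
    have hterm : ∀ k : ℕ, TrigammaAux.gdd k (1 + b) < 3 * TrigammaAux.gdd k (1 + a) := by
      intro k
      rw [TrigammaAux.gdd, TrigammaAux.gdd, mul_one_div]
      rw [div_lt_div_iff₀ (by positivity) (by positivity)]
      have hc2 : (2:ℝ) ≤ (k:ℝ) + 2 := by
        have : (0:ℝ) ≤ (k:ℝ) := Nat.cast_nonneg k
        linarith
      have hstep : 1 + a + ((k:ℝ) + 1) < Real.sqrt 3 * (1 + b + ((k:ℝ) + 1)) := by
        have hs1 : 1 < Real.sqrt 3 := by
          nlinarith
        nlinarith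
      have hpos1 : (0:ℝ) < 1 + a + ((k:ℝ) + 1) := by positivity
      have hpos2 : (0:ℝ) < Real.sqrt 3 * (1 + b + ((k:ℝ) + 1)) := by positivity
      have hsq : (1 + a + ((k:ℝ)+1)) * (1 + a + ((k:ℝ)+1))
          < (Real.sqrt 3 * (1 + b + ((k:ℝ)+1))) * (Real.sqrt 3 * (1 + b + ((k:ℝ)+1))) := by
        nlinarith [hstep, hpos1, hpos2]
      nlinarith [hsq, hs3]
    exact Summable.tsum_lt_tsum_of_nonneg
      (fun k => (TrigammaAux.gdd_pos h1b.le k).le)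
      (fun k => (hterm k).le)
      (hterm 0)
      ((TrigammaAux.summable_gdd h1a.le).mul_left 3)
  have hts : ∑' k, 3 * TrigammaAux.gdd k (1 + a) = 3 * ∑' k, TrigammaAux.gdd k (1 + a) :=
    tsum_mul_left
  rw [hts] at htail
  nlinarith [htail, hhead]
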